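/- arXiv:1602.06459 — 4 statements merged into one kernel-verified Lean document; each statement's English description precedes it below -/
import Mathlib

section
/- Let m ≥ 1, let C_E > 0 and t > 0. Suppose Q, P : [0,t] → ℝ^m are continuous and there is a finite set S ⊂ [0,t] such that for every s ∈ [0,t] \ S both Q and P are differentiable at s with Q'(s) = P(s) and ‖P'(s)‖ ≤ C_E·(‖Q(s)‖ + 1). Then for every s ∈ [0,t], ‖P(s)‖² + ‖Q(s)‖² ≤ (‖P(0)‖² + ‖Q(0)‖² + 1)·exp(2(C_E+1)s) − 1. In particular, for any compact set K ⊂ ℝ^{2m} there is a compact set K_t ⊂ ℝ^{2m}, depending only on K, t and C_E (and not on the exceptional set S), such that every such trajectory with (Q(0),P(0)) ∈ K satisfies (Q(s),P(s)) ∈ K_t for all s ∈ [0,t]. -/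
open Set

/-- Fencing with right derivatives only on the open interval. -/
lemma decay_open {g : ℝ → ℝ} {a b : ℝ}
    (hg : ContinuousOn g (Set.Icc a b))
    (h : ∀ x ∈ Set.Ioo a b, ∃ g', HasDerivWithinAt g g' (Set.Ici x) x ∧ g' ≤ 0) :
    ∀ x ∈ Set.Icc a b, g x ≤ g a := by
  intro x hx
  rcases eq_or_lt_of_le hx.1 with rfl | hax
  · exact le_rfl
  choose! g' hd hle using h
  have key : ∀ a' ∈ Set.Ioo a x, g x ≤ g a' := by
    intro a' ha'
    have hsub : Set.Icc a' x ⊆ Set.Icc a b := Icc_subset_Icc ha'.1.le hx.2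
    have := image_le_of_deriv_right_le_deriv_boundary (f := g) (f' := g') (a := a') (b := x)
      (hg.mono hsub)
      (fun y hy => hd y ⟨ha'.1.trans_le hy.1, hy.2.trans_le hx.2⟩)
      (B := fun _ => g a') (B' := fun _ => 0) le_rfl continuousOn_const
      (fun y _ => hasDerivWithinAt_const y _ _)
      (fun y hy => hle y ⟨ha'.1.trans_le hy.1, hy.2.trans_le hx.2⟩)
    exact this ⟨ha'.2.le, le_rfl⟩
  have hne : a ∈ closure (Set.Ioo a x) := by
    rw [closure_Ioo hax.ne]; exact ⟨le_rfl, hax.le⟩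
  haveI : (nhdsWithin a (Set.Ioo a x)).NeBot := mem_closure_iff_nhdsWithin_neBot.1 hne
  have htend : Filter.Tendsto g (nhdsWithin a (Set.Ioo a x)) (nhds (g a)) :=
    (hg a ⟨le_rfl, hax.le.trans hx.2⟩).mono (fun y hy => ⟨hy.1.le, hy.2.le.trans hx.2⟩)
  exact ge_of_tendsto htend (Filter.eventually_mem_set.2 self_mem_nhdsWithin |>.mono
    (fun a' ha' => key a' ha'))

/-- Fencing with right derivatives away from a finite set. -/
lemma decay_finite {S : Set ℝ} (hS : S.Finite) :
    ∀ (a b : ℝ) (g : ℝ → ℝ), ContinuousOn g (Set.Icc a b) →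
    (∀ x ∈ Set.Ioo a b \ S, ∃ g', HasDerivWithinAt g g' (Set.Ici x) x ∧ g' ≤ 0) →
    ∀ x ∈ Set.Icc a b, g x ≤ g a := by
  refine Set.Finite.induction_on (motive := fun S _ => ∀ (a b : ℝ) (g : ℝ → ℝ),
      ContinuousOn g (Set.Icc a b) →
      (∀ x ∈ Set.Ioo a b \ S, ∃ g', HasDerivWithinAt g g' (Set.Ici x) x ∧ g' ≤ 0) →
      ∀ x ∈ Set.Icc a b, g x ≤ g a) S hS ?_ ?_
  · intro a b g hg h
    exact decay_open hg (fun x hx => h x ⟨hx, Set.notMem_empty x⟩)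
  · intro c S' hc hS' IH
    intro a b g hg h
    by_cases hcab : c ∈ Set.Ioo a b
    · have hleft : ∀ y ∈ Set.Icc a c, g y ≤ g a := by
        refine IH a c g (hg.mono (Icc_subset_Icc le_rfl hcab.2.le)) ?_
        intro y hy
        refine h y ⟨⟨hy.1.1, hy.1.2.trans hcab.2⟩, ?_⟩
        simp only [Set.mem_insert_iff, not_or]
        exact ⟨hy.1.2.ne, hy.2⟩
      have hright : ∀ y ∈ Set.Icc c b, g y ≤ g c := by
        refine IH c b g (hg.mono (Icc_subset_Icc hcab.1.le le_rfl)) ?_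
        intro y hy
        refine h y ⟨⟨hcab.1.trans hy.1.1, hy.1.2⟩, ?_⟩
        simp only [Set.mem_insert_iff, not_or]
        exact ⟨hy.1.1.ne', hy.2⟩
      intro x hx
      rcases le_or_gt x c with h1 | h1
      · exact hleft x ⟨hx.1, h1⟩
      · exact (hright x ⟨h1.le, hx.2⟩).trans (hleft c ⟨hcab.1.le, le_rfl⟩)
    · intro x hx
      refine IH a b g hg ?_ x hx
      intro y hy
      refine h y ⟨hy.1, ?_⟩
      simp only [Set.mem_insert_iff, not_or]
      exact ⟨fun hyc => hcab (hyc ▸ hy.1), hy.2⟩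

/-- A priori confinement bound for frozen Gaussian trajectories with surface hopping.
If `Q, P : [0,t] → ℝ^m` are continuous, and outside a finite set `S` of (hopping) times
one has `Q' = P` and `‖P'‖ ≤ C_E(‖Q‖+1)`, then
`‖P(s)‖² + ‖Q(s)‖² ≤ (‖P(0)‖² + ‖Q(0)‖² + 1) exp(2(C_E+1)s) − 1` on `[0,t]`;
in particular any compact set `K` of initial data yields a compact set `K_t`
(independent of the exceptional set) containing all such trajectories up to time `t`. -/
theorem stmt_3 (m : ℕ) (hm : 1 ≤ m) (C_E t : ℝ) (hC : 0 < C_E) (ht : 0 < t) :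
    (∀ (Q P : ℝ → EuclideanSpace ℝ (Fin m)) (S : Set ℝ), S.Finite →
      ContinuousOn Q (Set.Icc 0 t) → ContinuousOn P (Set.Icc 0 t) →
      (∀ s ∈ Set.Icc 0 t \ S,
        HasDerivWithinAt Q (P s) (Set.Icc 0 t) s ∧
        ∃ P' : EuclideanSpace ℝ (Fin m),
          HasDerivWithinAt P P' (Set.Icc 0 t) s ∧ ‖P'‖ ≤ C_E * (‖Q s‖ + 1)) →
      ∀ s ∈ Set.Icc 0 t,
        ‖P s‖ ^ 2 + ‖Q s‖ ^ 2
          ≤ (‖P 0‖ ^ 2 + ‖Q 0‖ ^ 2 + 1) * Real.exp (2 * (C_E + 1) * s) - 1) ∧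
    (∀ K : Set (EuclideanSpace ℝ (Fin m) × EuclideanSpace ℝ (Fin m)), IsCompact K →
      ∃ Kt : Set (EuclideanSpace ℝ (Fin m) × EuclideanSpace ℝ (Fin m)), IsCompact Kt ∧
        ∀ (Q P : ℝ → EuclideanSpace ℝ (Fin m)) (S : Set ℝ), S.Finite →
          ContinuousOn Q (Set.Icc 0 t) → ContinuousOn P (Set.Icc 0 t) →
          (∀ s ∈ Set.Icc 0 t \ S,
            HasDerivWithinAt Q (P s) (Set.Icc 0 t) s ∧
            ∃ P' : EuclideanSpace ℝ (Fin m),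
              HasDerivWithinAt P P' (Set.Icc 0 t) s ∧ ‖P'‖ ≤ C_E * (‖Q s‖ + 1)) →
          (Q 0, P 0) ∈ K → ∀ s ∈ Set.Icc 0 t, (Q s, P s) ∈ Kt) := by
  have main : ∀ (Q P : ℝ → EuclideanSpace ℝ (Fin m)) (S : Set ℝ), S.Finite →
      ContinuousOn Q (Set.Icc 0 t) → ContinuousOn P (Set.Icc 0 t) →
      (∀ s ∈ Set.Icc 0 t \ S,
        HasDerivWithinAt Q (P s) (Set.Icc 0 t) s ∧
        ∃ P' : EuclideanSpace ℝ (Fin m),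
          HasDerivWithinAt P P' (Set.Icc 0 t) s ∧ ‖P'‖ ≤ C_E * (‖Q s‖ + 1)) →
      ∀ s ∈ Set.Icc 0 t,
        ‖P s‖ ^ 2 + ‖Q s‖ ^ 2
          ≤ (‖P 0‖ ^ 2 + ‖Q 0‖ ^ 2 + 1) * Real.exp (2 * (C_E + 1) * s) - 1 := by
    intro Q P S hS hQ hP hyp
    set lam : ℝ := 2 * (C_E + 1) with hlam
    set g : ℝ → ℝ := fun s =>
      ((inner ℝ (P s) (P s) : ℝ) + (inner ℝ (Q s) (Q s) : ℝ) + 1) * Real.exp (-lam * s) with hgdef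
    have hgc : ContinuousOn g (Set.Icc 0 t) := by
      apply ContinuousOn.mul
      · exact ((hP.inner hP).add (hQ.inner hQ)).add continuousOn_const
      · exact (Real.continuous_exp.comp (continuous_const.mul continuous_id)).continuousOn
    have hgd : ∀ x ∈ Set.Ioo 0 t \ S,
        ∃ g', HasDerivWithinAt g g' (Set.Ici x) x ∧ g' ≤ 0 := by
      intro x hx
      obtain ⟨hQd, P', hPd, hPb⟩ := hyp x ⟨⟨hx.1.1.le, hx.1.2.le⟩, hx.2⟩
      have hmem : Set.Icc (0:ℝ) t ∈ nhdsWithin x (Set.Ici x) :=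
        Icc_mem_nhdsGE_of_mem ⟨hx.1.1.le, hx.1.2⟩
      have hQd' : HasDerivWithinAt Q (P x) (Set.Ici x) x := hQd.mono_of_mem_nhdsWithin hmem
      have hPd' : HasDerivWithinAt P P' (Set.Ici x) x := hPd.mono_of_mem_nhdsWithin hmem
      have hu : HasDerivWithinAt
          (fun s => ((inner ℝ (P s) (P s) : ℝ) + (inner ℝ (Q s) (Q s) : ℝ) + 1))
          (((inner ℝ (P x) P' : ℝ) + (inner ℝ P' (P x) : ℝ)) +
            ((inner ℝ (Q x) (P x) : ℝ) + (inner ℝ (P x) (Q x) : ℝ))) (Set.Ici x) x :=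
        ((hPd'.inner ℝ hPd').add (hQd'.inner ℝ hQd')).add_const 1
      have hexp : HasDerivWithinAt (fun s => Real.exp (-lam * s))
          (Real.exp (-lam * x) * (-lam)) (Set.Ici x) x := by
        have := (((hasDerivAt_id x).const_mul (-lam)).exp).hasDerivWithinAt
          (s := Set.Ici x)
        simpa using this
      refine ⟨_, hu.mul hexp, ?_⟩
      -- show nonpositivity
      have hPP : (inner ℝ (P x) (P x) : ℝ) = ‖P x‖ ^ 2 := real_inner_self_eq_norm_sq _
      have hQQ : (inner ℝ (Q x) (Q x) : ℝ) = ‖Q x‖ ^ 2 := real_inner_self_eq_norm_sq _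
      have h1 : (inner ℝ (P x) P' : ℝ) ≤ ‖P x‖ * (C_E * (‖Q x‖ + 1)) :=
        (real_inner_le_norm _ _).trans
          (by
            have := mul_le_mul_of_nonneg_left hPb (norm_nonneg (P x))
            linarith)
      have h2 : (inner ℝ P' (P x) : ℝ) ≤ ‖P x‖ * (C_E * (‖Q x‖ + 1)) := by
        rw [real_inner_comm]; exact h1
      have h3 : (inner ℝ (Q x) (P x) : ℝ) ≤ ‖Q x‖ * ‖P x‖ := real_inner_le_norm _ _
      have h4 : (inner ℝ (P x) (Q x) : ℝ) ≤ ‖Q x‖ * ‖P x‖ := by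
        rw [real_inner_comm]; exact h3
      have hexppos : 0 < Real.exp (-lam * x) := Real.exp_pos _
      have hPn : (0:ℝ) ≤ ‖P x‖ := norm_nonneg _
      have hQn : (0:ℝ) ≤ ‖Q x‖ := norm_nonneg _
      rw [hPP, hQQ]
      have hkey : ((inner ℝ (P x) P' : ℝ) + (inner ℝ P' (P x) : ℝ)) +
          ((inner ℝ (Q x) (P x) : ℝ) + (inner ℝ (P x) (Q x) : ℝ))
          ≤ lam * (‖P x‖ ^ 2 + ‖Q x‖ ^ 2 + 1) := by
        have eA : 2 * (‖P x‖ * (‖Q x‖ + 1)) ≤ ‖P x‖ ^ 2 + 2 * ‖Q x‖ ^ 2 + 2 := by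
          nlinarith [sq_nonneg (‖P x‖ - (‖Q x‖ + 1)), sq_nonneg (‖Q x‖ - 1)]
        have eB := mul_le_mul_of_nonneg_left eA hC.le
        have e3 : 2 * (‖Q x‖ * ‖P x‖) ≤ ‖Q x‖ ^ 2 + ‖P x‖ ^ 2 := by
          nlinarith [sq_nonneg (‖Q x‖ - ‖P x‖)]
        rw [hlam]
        nlinarith [hC.le, sq_nonneg (‖P x‖), sq_nonneg (‖Q x‖)]
      nlinarith [mul_le_mul_of_nonneg_right hkey hexppos.le]
    have hbound := decay_finite hS 0 t g hgc hgd
    intro s hs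
    have hgs : g s ≤ g 0 := hbound s hs
    have hg0 : g 0 = (inner ℝ (P 0) (P 0) : ℝ) + (inner ℝ (Q 0) (Q 0) : ℝ) + 1 := by
      simp [hgdef]
    have hPP : ∀ y, (inner ℝ (P y) (P y) : ℝ) = ‖P y‖ ^ 2 :=
      fun y => real_inner_self_eq_norm_sq _
    have hQQ : ∀ y, (inner ℝ (Q y) (Q y) : ℝ) = ‖Q y‖ ^ 2 :=
      fun y => real_inner_self_eq_norm_sq _
    have hexppos : 0 < Real.exp (-lam * s) := Real.exp_pos _
    have hmul : Real.exp (-lam * s) * Real.exp (lam * s) = 1 := by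
      rw [← Real.exp_add, neg_mul, neg_add_cancel, Real.exp_zero]
    have hgs' : (‖P s‖ ^ 2 + ‖Q s‖ ^ 2 + 1) * Real.exp (-lam * s)
        ≤ ‖P 0‖ ^ 2 + ‖Q 0‖ ^ 2 + 1 := by
      rw [← hPP, ← hQQ, ← hPP 0, ← hQQ 0, ← hg0]; exact hgs
    have hexp_eq : Real.exp (2 * (C_E + 1) * s) = Real.exp (lam * s) := by rw [hlam]
    rw [hexp_eq]
    have := mul_le_mul_of_nonneg_right hgs' (Real.exp_pos (lam * s)).le
    rw [mul_assoc, hmul, mul_one] at this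
    linarith
  refine ⟨main, ?_⟩
  intro K hK
  obtain ⟨R, hR⟩ := hK.isBounded.subset_closedBall 0
  set M : ℝ := Real.sqrt ((2 * R ^ 2 + 1) * Real.exp (2 * (C_E + 1) * t)) with hM
  refine ⟨Metric.closedBall 0 M, isCompact_closedBall _ _, ?_⟩
  intro Q P S hS hQ hP hyp h0 s hs
  have hbd := main Q P S hS hQ hP hyp s hs
  have h0' : ‖(Q 0, P 0)‖ ≤ R := by
    have := hR h0
    simpa [Metric.mem_closedBall, dist_eq_norm] using this
  have hQ0 : ‖Q 0‖ ≤ R := le_trans (by rw [Prod.norm_def]; exact le_max_left _ _) h0'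
  have hP0 : ‖P 0‖ ≤ R := le_trans (by rw [Prod.norm_def]; exact le_max_right _ _) h0'
  have hRn : (0:ℝ) ≤ R := le_trans (norm_nonneg _) h0'
  have hexp_le : Real.exp (2 * (C_E + 1) * s) ≤ Real.exp (2 * (C_E + 1) * t) := by
    apply Real.exp_le_exp.2
    have : (0:ℝ) ≤ 2 * (C_E + 1) := by linarith
    exact mul_le_mul_of_nonneg_left hs.2 this
  have hsq : ‖P s‖ ^ 2 + ‖Q s‖ ^ 2 ≤ (2 * R ^ 2 + 1) * Real.exp (2 * (C_E + 1) * t) := by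
    have h1 : ‖P 0‖ ^ 2 + ‖Q 0‖ ^ 2 + 1 ≤ 2 * R ^ 2 + 1 := by
      nlinarith [mul_self_le_mul_self (norm_nonneg (P 0)) hP0,
        mul_self_le_mul_self (norm_nonneg (Q 0)) hQ0]
    have h2 : (0:ℝ) < Real.exp (2 * (C_E + 1) * s) := Real.exp_pos _
    nlinarith [Real.exp_pos (2 * (C_E + 1) * t)]
  have hMn : (0:ℝ) ≤ (2 * R ^ 2 + 1) * Real.exp (2 * (C_E + 1) * t) := by
    positivity
  have hQs : ‖Q s‖ ≤ M := by
    rw [hM]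
    refine (Real.le_sqrt (norm_nonneg _) hMn).2 ?_
    nlinarith [sq_nonneg (‖P s‖)]
  have hPs : ‖P s‖ ≤ M := by
    rw [hM]
    refine (Real.le_sqrt (norm_nonneg _) hMn).2 ?_
    nlinarith [sq_nonneg (‖Q s‖)]
  simp only [Metric.mem_closedBall, dist_eq_norm, sub_zero, Prod.norm_def]
  exact max_le hQs hPs
end

section
/- Let m ≥ 1 and let A, B, C, D be m × m real matrices such that the 2m × 2m block matrix J = fromBlocks A B C D is symplectic, i.e. JᵀΩJ = Ω where Ω = fromBlocks 0 I_m (−I_m) 0. Then the m × m complex matrix Z := (A + D) + i·(C − B) is invertible. -/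
open Matrix Complex
open scoped ComplexOrder

/-- If the block matrix `J = [[A, B],[C, D]]` is symplectic (`JᵀΩJ = Ω` with
`Ω = [[0, I],[−I, 0]]`), then the complex matrix `Z = (A + D) + i(C − B)` is invertible. -/
theorem stmt_5 (m : ℕ) (hm : 1 ≤ m) (A B C D : Matrix (Fin m) (Fin m) ℝ)
    (hJ : (Matrix.fromBlocks A B C D)ᵀ * Matrix.fromBlocks 0 1 (-1) 0 *
        Matrix.fromBlocks A B C D = Matrix.fromBlocks 0 1 (-1) 0) :
    IsUnit ((A + D).map (Complex.ofReal) + Complex.I • (C - B).map (Complex.ofReal)) := by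
  rw [Matrix.fromBlocks_transpose, Matrix.fromBlocks_multiply, Matrix.fromBlocks_multiply,
    Matrix.fromBlocks_inj] at hJ
  obtain ⟨h1, h2, h3, h4⟩ := hJ
  simp only [Matrix.mul_zero, Matrix.mul_one, Matrix.mul_neg, zero_add, add_zero,
    Matrix.zero_mul, Matrix.neg_mul] at h1 h2 h3 h4
  rw [neg_add_eq_sub, sub_eq_zero] at h1 h4
  have hAD : Aᵀ * D = Cᵀ * B + 1 := by rw [← h2]; abel
  have hDA : Dᵀ * A = Bᵀ * C + 1 := by
    rw [neg_add_eq_sub, sub_eq_iff_eq_add] at h3; rw [h3]; abel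
  have hCA : Cᵀ * A = Aᵀ * C := h1.symm
  have hDB : Dᵀ * B = Bᵀ * D := h4.symm
  -- real identities
  have re : (A + D)ᵀ * (A + D) + (C - B)ᵀ * (C - B)
      = (A - D)ᵀ * (A - D) + (C + B)ᵀ * (C + B) + (4 : ℝ) • 1 := by
    simp only [Matrix.transpose_add, Matrix.transpose_sub, Matrix.add_mul, Matrix.mul_add,
      Matrix.sub_mul, Matrix.mul_sub, hAD, hDA, hCA, hDB]
    have : ((4 : ℝ) • 1 : Matrix (Fin m) (Fin m) ℝ) = 1 + 1 + 1 + 1 := by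
      rw [show (4:ℝ) = 1+1+1+1 by norm_num]; simp [add_smul]
    rw [this]; abel
  have im : (A + D)ᵀ * (C - B) - (C - B)ᵀ * (A + D)
      = (C + B)ᵀ * (A - D) - (A - D)ᵀ * (C + B) := by
    simp only [Matrix.transpose_add, Matrix.transpose_sub, Matrix.add_mul, Matrix.mul_add,
      Matrix.sub_mul, Matrix.mul_sub, hAD, hDA, hCA, hDB]
    abel
  -- complexification helpers
  have hmapmul : ∀ X Y : Matrix (Fin m) (Fin m) ℝ,
      (X * Y).map Complex.ofReal = X.map Complex.ofReal * Y.map Complex.ofReal := fun X Y =>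
    Matrix.map_mul (f := Complex.ofRealHom)
  have hmapadd : ∀ X Y : Matrix (Fin m) (Fin m) ℝ,
      (X + Y).map Complex.ofReal = X.map Complex.ofReal + Y.map Complex.ofReal := fun X Y => by
    ext i j; simp
  have hmapsub : ∀ X Y : Matrix (Fin m) (Fin m) ℝ,
      (X - Y).map Complex.ofReal = X.map Complex.ofReal - Y.map Complex.ofReal := fun X Y => by
    ext i j; simp
  have hmap4 : (((4 : ℝ) • 1 : Matrix (Fin m) (Fin m) ℝ)).map Complex.ofReal
      = (4 : ℂ) • (1 : Matrix (Fin m) (Fin m) ℂ) := by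
    ext i j
    simp [Matrix.one_apply, apply_ite Complex.ofReal]
  have hmapT : ∀ X : Matrix (Fin m) (Fin m) ℝ,
      (X.map Complex.ofReal)ᴴ = Xᵀ.map Complex.ofReal := by
    intro X; ext i j
    simp [Matrix.conjTranspose_apply, Matrix.map_apply, Complex.conj_ofReal]
  -- complexified identities (atoms: a b c d and their transposed versions)
  have re' := congrArg (Matrix.map · Complex.ofReal) re
  have im' := congrArg (Matrix.map · Complex.ofReal) im
  simp only [Matrix.transpose_add, Matrix.transpose_sub, hmapmul, hmapadd, hmapsub, hmap4]
    at re' im'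
  rw [hmapadd, hmapsub]
  set a : Matrix (Fin m) (Fin m) ℂ := A.map Complex.ofReal with ha
  set b : Matrix (Fin m) (Fin m) ℂ := B.map Complex.ofReal with hb
  set c : Matrix (Fin m) (Fin m) ℂ := C.map Complex.ofReal with hc
  set d : Matrix (Fin m) (Fin m) ℂ := D.map Complex.ofReal with hd
  set at' : Matrix (Fin m) (Fin m) ℂ := Aᵀ.map Complex.ofReal with hat
  set bt : Matrix (Fin m) (Fin m) ℂ := Bᵀ.map Complex.ofReal with hbt
  set ct : Matrix (Fin m) (Fin m) ℂ := Cᵀ.map Complex.ofReal with hct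
  set dt : Matrix (Fin m) (Fin m) ℂ := Dᵀ.map Complex.ofReal with hdt
  set Z : Matrix (Fin m) (Fin m) ℂ := (a + d) + Complex.I • (c - b) with hZ
  set W : Matrix (Fin m) (Fin m) ℂ := (a - d) - Complex.I • (c + b) with hW
  have hZH : Zᴴ = (at' + dt) - Complex.I • (ct - bt) := by
    rw [hZ, Matrix.conjTranspose_add, Matrix.conjTranspose_smul, Matrix.conjTranspose_add,
      Matrix.conjTranspose_sub, ha, hb, hc, hd, hmapT, hmapT, hmapT, hmapT,
      Complex.star_def, Complex.conj_I, neg_smul, ← sub_eq_add_neg]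
  have hWH : Wᴴ = (at' - dt) + Complex.I • (ct + bt) := by
    rw [hW, Matrix.conjTranspose_sub, Matrix.conjTranspose_smul, Matrix.conjTranspose_add,
      Matrix.conjTranspose_sub, ha, hb, hc, hd, hmapT, hmapT, hmapT, hmapT,
      Complex.star_def, Complex.conj_I, neg_smul, sub_neg_eq_add]
  have key : Zᴴ * Z = Wᴴ * W + (4 : ℂ) • 1 := by
    rw [hZH, hWH, hZ, hW]
    have expand1 : ((at' + dt) - Complex.I • (ct - bt)) * ((a + d) + Complex.I • (c - b))
        = ((at' + dt) * (a + d) + (ct - bt) * (c - b))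
          + Complex.I • ((at' + dt) * (c - b) - (ct - bt) * (a + d)) := by
      simp only [sub_mul, mul_add, add_mul, mul_sub, smul_mul_assoc, mul_smul_comm,
        smul_smul, Complex.I_mul_I, neg_one_smul, smul_sub, smul_add, neg_smul, neg_neg,
        one_smul]
      abel
    have expand2 : ((at' - dt) + Complex.I • (ct + bt)) * ((a - d) - Complex.I • (c + b))
        = ((at' - dt) * (a - d) + (ct + bt) * (c + b))
          + Complex.I • ((ct + bt) * (a - d) - (at' - dt) * (c + b)) := by
      simp only [sub_mul, mul_add, add_mul, mul_sub, smul_mul_assoc, mul_smul_comm,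
        smul_smul, Complex.I_mul_I, neg_one_smul, smul_sub, smul_add, neg_smul, neg_neg,
        one_smul]
      abel
    rw [expand1, expand2, re', im']
    abel
  have hWpos : (Wᴴ * W).PosSemidef := Matrix.posSemidef_conjTranspose_mul_self W
  have h4pos : ((4 : ℂ) • (1 : Matrix (Fin m) (Fin m) ℂ)).PosDef := by
    have h44 : ((4 : ℂ) • (1 : Matrix (Fin m) (Fin m) ℂ))
        = ((4 : ℕ) : Matrix (Fin m) (Fin m) ℂ) := by
      rw [show (4:ℂ) = ((4:ℕ):ℂ) by norm_num, Nat.cast_smul_eq_nsmul, nsmul_eq_mul, mul_one]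
    rw [h44]
    exact Matrix.PosDef.natCast 4 (by norm_num)
  have hkey : (Zᴴ * Z).PosDef := by
    rw [key, add_comm]
    exact h4pos.add_posSemidef hWpos
  have hunit : IsUnit (Zᴴ * Z) := hkey.isUnit
  rw [Matrix.isUnit_iff_isUnit_det, Matrix.det_mul] at hunit
  rw [Matrix.isUnit_iff_isUnit_det]
  exact isUnit_of_mul_isUnit_right hunit
end

section
/- Let n ≥ 1, let H : ℝ → Matrix(n, n, ℂ) be differentiable at x₀ with H(x) Hermitian for all x. Let ψ_k, ψ_l : ℝ → ℂ^n be differentiable at x₀ and E_k, E_l : ℝ → ℝ differentiable at x₀ such that H(x)·ψ_k(x) = E_k(x)·ψ_k(x) and H(x)·ψ_l(x) = E_l(x)·ψ_l(x) for all x in a neighborhood of x₀, ⟨ψ_l(x₀), ψ_k(x₀)⟩ = 0, and E_k(x₀) ≠ E_l(x₀). Then ⟨ψ_l(x₀), ψ_k'(x₀)⟩ = ⟨ψ_l(x₀), H'(x₀)·ψ_k(x₀)⟩ / (E_k(x₀) − E_l(x₀)). -/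
open Matrix

/-- First-order perturbation theory formula for the non-adiabatic coupling:
if `H(x)ψ_k(x) = E_k(x)ψ_k(x)` and `H(x)ψ_l(x) = E_l(x)ψ_l(x)` near `x₀` with `H`
Hermitian, `⟨ψ_l(x₀), ψ_k(x₀)⟩ = 0` and `E_k(x₀) ≠ E_l(x₀)`, then
`⟨ψ_l, ψ_k'⟩ = ⟨ψ_l, H'ψ_k⟩ / (E_k − E_l)` at `x₀`. -/
theorem stmt_10 (n : ℕ) (hn : 1 ≤ n) (x₀ : ℝ)
    (H : ℝ → Matrix (Fin n) (Fin n) ℂ) (H' : Matrix (Fin n) (Fin n) ℂ)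
    (hHderiv : ∀ i j, HasDerivAt (fun x => H x i j) (H' i j) x₀)
    (hHerm : ∀ x, (H x).IsHermitian)
    (ψk ψl : ℝ → Fin n → ℂ) (ψk' ψl' : Fin n → ℂ)
    (hψk : ∀ i, HasDerivAt (fun x => ψk x i) (ψk' i) x₀)
    (hψl : ∀ i, HasDerivAt (fun x => ψl x i) (ψl' i) x₀)
    (Ek El : ℝ → ℝ)
    (hEk : DifferentiableAt ℝ Ek x₀) (hEl : DifferentiableAt ℝ El x₀)
    (heigk : ∀ᶠ x in nhds x₀, (H x).mulVec (ψk x) = ((Ek x : ℂ)) • ψk x)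
    (heigl : ∀ᶠ x in nhds x₀, (H x).mulVec (ψl x) = ((El x : ℂ)) • ψl x)
    (horth : ∑ i, (starRingEnd ℂ) (ψl x₀ i) * ψk x₀ i = 0)
    (hgap : Ek x₀ ≠ El x₀) :
    ∑ i, (starRingEnd ℂ) (ψl x₀ i) * ψk' i
      = (∑ i, (starRingEnd ℂ) (ψl x₀ i) * (H'.mulVec (ψk x₀)) i)
          / ((Ek x₀ : ℂ) - (El x₀ : ℂ)) := by
  set c := starRingEnd ℂ
  -- derivative of Ek as a complex-valued function
  have hEkC : HasDerivAt (fun x => (Ek x : ℂ)) ((deriv Ek x₀ : ℝ) : ℂ) x₀ :=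
    (hEk.hasDerivAt).ofReal_comp
  -- key: differentiate the eigenvalue equation componentwise
  have key : ∀ i, (∑ j, (H' i j * ψk x₀ j + H x₀ i j * ψk' j))
      = ((deriv Ek x₀ : ℝ) : ℂ) * ψk x₀ i + (Ek x₀ : ℂ) * ψk' i := by
    intro i
    have hL : HasDerivAt (fun x => ∑ j, H x i j * ψk x j)
        (∑ j, (H' i j * ψk x₀ j + H x₀ i j * ψk' j)) x₀ :=
      HasDerivAt.fun_sum fun j _ => (hHderiv i j).mul (hψk j)
    have hR : HasDerivAt (fun x => (Ek x : ℂ) * ψk x i)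
        (((deriv Ek x₀ : ℝ) : ℂ) * ψk x₀ i + (Ek x₀ : ℂ) * ψk' i) x₀ :=
      hEkC.mul (hψk i)
    have heq : (fun x => ∑ j, H x i j * ψk x j) =ᶠ[nhds x₀]
        (fun x => (Ek x : ℂ) * ψk x i) := by
      filter_upwards [heigk] with x hx
      have := congrFun hx i
      simpa [Matrix.mulVec, dotProduct, Pi.smul_apply, smul_eq_mul] using this
    exact (hL.congr_of_eventuallyEq heq.symm).unique hR
  -- Hermitian property at x₀: conj (H x₀ i j) = H x₀ j i
  have hherm : ∀ i j, c (H x₀ i j) = H x₀ j i := by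
    intro i j
    have := congrFun (congrFun (hHerm x₀) j) i
    simpa [Matrix.conjTranspose_apply, c] using this
  -- eigen equation for ψl at x₀
  have heigl0 : (H x₀).mulVec (ψl x₀) = ((El x₀ : ℂ)) • ψl x₀ := heigl.self_of_nhds
  -- sum key against conj ψl
  have main := congrArg (fun v : Fin n → ℂ => ∑ i, c (ψl x₀ i) * v i)
    (funext key)
  simp only [Finset.mul_sum, mul_add, Finset.sum_add_distrib] at main
  -- identify the H x₀ * ψk' term as El * ⟨ψl, ψk'⟩
  have hswap : ∑ i, ∑ j, c (ψl x₀ i) * (H x₀ i j * ψk' j)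
      = (El x₀ : ℂ) * ∑ j, c (ψl x₀ j) * ψk' j := by
    rw [Finset.sum_comm]
    rw [Finset.mul_sum]
    refine Finset.sum_congr rfl fun j _ => ?_
    have : ∑ i, c (ψl x₀ i) * (H x₀ i j * ψk' j)
        = (∑ i, c (H x₀ j i * ψl x₀ i)) * ψk' j := by
      rw [Finset.sum_mul]
      refine Finset.sum_congr rfl fun i _ => ?_
      rw [_root_.map_mul, hherm]
      ring
    rw [this, ← map_sum]
    have hj : ∑ i, H x₀ j i * ψl x₀ i = (El x₀ : ℂ) * ψl x₀ j := by
      have := congrFun heigl0 j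
      simpa [Matrix.mulVec, dotProduct, Pi.smul_apply, smul_eq_mul] using this
    rw [hj, _root_.map_mul]
    simp [c]
    ring
  -- orthogonality kills the Ek' term
  have horth' : ∑ i, c (ψl x₀ i) * (((deriv Ek x₀ : ℝ) : ℂ) * ψk x₀ i) = 0 := by
    have : ∑ i, c (ψl x₀ i) * (((deriv Ek x₀ : ℝ) : ℂ) * ψk x₀ i)
        = ((deriv Ek x₀ : ℝ) : ℂ) * ∑ i, c (ψl x₀ i) * ψk x₀ i := by
      rw [Finset.mul_sum]; refine Finset.sum_congr rfl fun i _ => by ring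
    rw [this, horth, mul_zero]
  have hEkfac : ∑ i, c (ψl x₀ i) * ((Ek x₀ : ℂ) * ψk' i)
      = (Ek x₀ : ℂ) * ∑ i, c (ψl x₀ i) * ψk' i := by
    rw [Finset.mul_sum]; exact Finset.sum_congr rfl fun i _ => by ring
  have hH' : ∑ i, ∑ j, c (ψl x₀ i) * (H' i j * ψk x₀ j)
      = ∑ i, c (ψl x₀ i) * (H'.mulVec (ψk x₀)) i := by
    refine Finset.sum_congr rfl fun i _ => ?_
    rw [← Finset.mul_sum]
    rfl
  rw [hswap, horth', hEkfac, hH'] at main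
  -- main : ⟨ψl,H'ψk⟩ + El * S = 0 + Ek * S
  have hne : (Ek x₀ : ℂ) - (El x₀ : ℂ) ≠ 0 := by
    intro h
    apply hgap
    have := sub_eq_zero.mp h
    exact_mod_cast this
  field_simp
  linear_combination -main
end

section
/- Let n ≥ 1, let M : ℝ → Matrix(n, n, ℂ) and F : ℝ → ℝ be differentiable at x₀, and set H(x) := F(x)·M(x). Let ψ_k, ψ_l : ℝ → ℂ^n and λ_k, λ_l : ℝ → ℝ with M(x)·ψ_k(x) = λ_k(x)·ψ_k(x) and M(x)·ψ_l(x) = λ_l(x)·ψ_l(x) for all x near x₀, and suppose ⟨ψ_l(x₀), ψ_k(x₀)⟩ = 0, λ_k(x₀) ≠ λ_l(x₀), and F(x₀) ≠ 0. Then: (i) H(x)·ψ_k(x) = F(x)λ_k(x)·ψ_k(x) for all x near x₀ (so the eigenvalues of H are E_k = F·λ_k with the same eigenvectors as M); and (ii) ⟨ψ_l(x₀), H'(x₀)·ψ_k(x₀)⟩ / (F(x₀)λ_k(x₀) − F(x₀)λ_l(x₀)) = ⟨ψ_l(x₀), M'(x₀)·ψ_k(x₀)⟩ / (λ_k(x₀)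 − λ_l(x₀)). In particular the right-hand side is independent of F. -/
open Matrix

/-- For the family `H(x) = F(x)·M(x)` with common eigenvectors `ψ_k, ψ_l` of `M`:
(i) `ψ_k` is an eigenvector of `H` with eigenvalue `F·λ_k` near `x₀`; and
(ii) the coupling quotient `⟨ψ_l, H'ψ_k⟩/(Fλ_k − Fλ_l)` computed from the derivative
`H'` of `H` at `x₀` equals `⟨ψ_l, M'ψ_k⟩/(λ_k − λ_l)`, hence is independent of `F`. -/
theorem stmt_12 (n : ℕ) (hn : 1 ≤ n) (x₀ : ℝ)
    (M : ℝ → Matrix (Fin n) (Fin n) ℂ) (M' : Matrix (Fin n) (Fin n) ℂ)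
    (hMderiv : ∀ i j, HasDerivAt (fun x => M x i j) (M' i j) x₀)
    (F : ℝ → ℝ) (F' : ℝ) (hFderiv : HasDerivAt F F' x₀)
    (ψk ψl : ℝ → Fin n → ℂ) (lamk laml : ℝ → ℝ)
    (heigk : ∀ᶠ x in nhds x₀, (M x).mulVec (ψk x) = ((lamk x : ℂ)) • ψk x)
    (heigl : ∀ᶠ x in nhds x₀, (M x).mulVec (ψl x) = ((laml x : ℂ)) • ψl x)
    (horth : ∑ i, (starRingEnd ℂ) (ψl x₀ i) * ψk x₀ i = 0)
    (hgap : lamk x₀ ≠ laml x₀) (hF : F x₀ ≠ 0) :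
    (∀ᶠ x in nhds x₀,
        (((F x : ℂ)) • M x).mulVec (ψk x) = (((F x * lamk x : ℝ) : ℂ)) • ψk x) ∧
    (∀ H' : Matrix (Fin n) (Fin n) ℂ,
      (∀ i j, HasDerivAt (fun x => ((F x : ℂ)) • M x i j) (H' i j) x₀) →
      (∑ i, (starRingEnd ℂ) (ψl x₀ i) * (H'.mulVec (ψk x₀)) i)
          / (((F x₀ * lamk x₀ : ℝ) : ℂ) - ((F x₀ * laml x₀ : ℝ) : ℂ))
        = (∑ i, (starRingEnd ℂ) (ψl x₀ i) * (M'.mulVec (ψk x₀)) i)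
            / (((lamk x₀ : ℝ) : ℂ) - ((laml x₀ : ℝ) : ℂ))) := by
  constructor
  · filter_upwards [heigk] with x hx
    rw [Matrix.smul_mulVec, hx, smul_smul]
    push_cast
    ring_nf
  · intro H' hH'
    have hHval : ∀ i j, H' i j = F' * M x₀ i j + F x₀ * M' i j := by
      intro i j
      have hFc : HasDerivAt (fun x => ((F x : ℝ) : ℂ)) (F' : ℂ) x₀ :=
        hFderiv.ofReal_comp
      have := hFc.mul (hMderiv i j)
      have h2 : HasDerivAt (fun x => ((F x : ℂ)) • M x i j)
          ((F' : ℂ) * M x₀ i j + (F x₀ : ℂ) * M' i j) x₀ := by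
        simp only [smul_eq_mul]
        exact this
      exact (hH' i j).unique h2
    have hHmat : H' = (F' : ℂ) • M x₀ + (F x₀ : ℂ) • M' := by
      ext i j; simp [hHval i j, Matrix.add_apply, Matrix.smul_apply, smul_eq_mul]
    have heigk0 : (M x₀).mulVec (ψk x₀) = ((lamk x₀ : ℂ)) • ψk x₀ :=
      heigk.self_of_nhds
    have hA : ∑ i, (starRingEnd ℂ) (ψl x₀ i) * ((M x₀).mulVec (ψk x₀)) i = 0 := by
      rw [heigk0]
      simp only [Pi.smul_apply, smul_eq_mul]
      rw [Finset.sum_congr rfl (fun i _ => by ring : ∀ i ∈ Finset.univ,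
        (starRingEnd ℂ) (ψl x₀ i) * ((lamk x₀ : ℂ) * ψk x₀ i)
          = (lamk x₀ : ℂ) * ((starRingEnd ℂ) (ψl x₀ i) * ψk x₀ i))]
      rw [← Finset.mul_sum, horth, mul_zero]
    have hnum : ∑ i, (starRingEnd ℂ) (ψl x₀ i) * (H'.mulVec (ψk x₀)) i
        = (F x₀ : ℂ) * ∑ i, (starRingEnd ℂ) (ψl x₀ i) * (M'.mulVec (ψk x₀)) i := by
      rw [hHmat, Matrix.add_mulVec, Matrix.smul_mulVec, Matrix.smul_mulVec]
      simp only [Pi.add_apply, Pi.smul_apply, smul_eq_mul]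
      rw [Finset.sum_congr rfl (fun i _ => by ring : ∀ i ∈ Finset.univ,
        (starRingEnd ℂ) (ψl x₀ i) * ((F' : ℂ) * ((M x₀).mulVec (ψk x₀)) i
          + (F x₀ : ℂ) * (M'.mulVec (ψk x₀)) i)
        = (F' : ℂ) * ((starRingEnd ℂ) (ψl x₀ i) * ((M x₀).mulVec (ψk x₀)) i)
          + (F x₀ : ℂ) * ((starRingEnd ℂ) (ψl x₀ i) * (M'.mulVec (ψk x₀)) i))]
      rw [Finset.sum_add_distrib, ← Finset.mul_sum, ← Finset.mul_sum, hA, mul_zero, zero_add]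
    rw [hnum]
    have hgapC : ((lamk x₀ : ℂ)) - ((laml x₀ : ℂ)) ≠ 0 := by
      intro h
      apply hgap
      have := sub_eq_zero.mp h
      exact_mod_cast this
    have hFC : (F x₀ : ℂ) ≠ 0 := by exact_mod_cast hF
    have hden : ((F x₀ * lamk x₀ : ℝ) : ℂ) - ((F x₀ * laml x₀ : ℝ) : ℂ)
        = (F x₀ : ℂ) * (((lamk x₀ : ℂ)) - ((laml x₀ : ℂ))) := by push_cast; ring
    rw [hden, mul_div_mul_left _ _ hFC]
end
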